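/- For -N/2 ≤ β ≤ N/2 with N a positive integer, exp(-π²β²/(2N)) (1 - C'β⁴/N⁴)^N ≤ cos^N(πβ/N) ≤ exp(-π²β²/(2N)) for an appropriate absolute constant C' > 0. -/

import Mathlib

open Real

private lemma exp_neg_cubic_le {y : ℝ} (h0 : 0 ≤ y) (h1 : y ≤ 1) :
    1 - y + y^2/2 - 2/9*y^3 ≤ Real.exp (-y) := by
  have h := Real.exp_bound (x := -y) (by rwa [abs_neg, abs_of_nonneg h0]) (n := 3) (by norm_num)
  rw [abs_sub_le_iff] at h
  have h2 := h.2
  have hs : ∑ m ∈ Finset.range 3, (-y) ^ m / (m.factorial : ℝ) = 1 - y + y^2/2 := by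
    simp [Finset.sum_range_succ]
    ring
  rw [hs, abs_neg, abs_of_nonneg h0] at h2
  norm_num [Nat.factorial] at h2 ⊢
  nlinarith [h2]

private lemma exp_half_sq_lower {θ : ℝ} (h0 : 0 ≤ θ) (h1 : θ ≤ 1.5707965) :
    (1 - θ^2/4 + θ^4/32 - θ^6/288)^2 ≤ Real.exp (-(θ^2/2)) := by
  have hy0 : 0 ≤ θ^2/4 := by positivity
  have hy1 : θ^2/4 ≤ 1 := by nlinarith
  have h := exp_neg_cubic_le hy0 hy1
  have hq : 0 ≤ 1 - θ^2/4 + (θ^2/4)^2/2 - 2/9*(θ^2/4)^3 := by nlinarith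
  have heq : 1 - θ^2/4 + (θ^2/4)^2/2 - 2/9*(θ^2/4)^3 = 1 - θ^2/4 + θ^4/32 - θ^6/288 := by ring
  rw [heq] at h hq
  have hmul := mul_le_mul h h hq (Real.exp_pos _).le
  calc (1 - θ^2/4 + θ^4/32 - θ^6/288)^2
      = (1 - θ^2/4 + θ^4/32 - θ^6/288) * (1 - θ^2/4 + θ^4/32 - θ^6/288) := sq _
    _ ≤ Real.exp (-(θ^2/4)) * Real.exp (-(θ^2/4)) := hmul
    _ = Real.exp (-(θ^2/4) + -(θ^2/4)) := (Real.exp_add _ _).symm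
    _ = Real.exp (-(θ^2/2)) := by ring_nf

private lemma polyU1 {t : ℝ} (h0 : 0 ≤ t) (h1 : t ≤ 1) :
    1 - t^2/2 + 5/96*t^4 ≤ (1 - t^2/4 + t^4/32 - t^6/288)^2 := by
  nlinarith [sq_nonneg t, sq_nonneg (t^2), sq_nonneg (t^3), sq_nonneg (t*(1-t)),
    sq_nonneg (t^2*(1-t^2)), sq_nonneg (t^3*(1-t^2)), sq_nonneg (t^4), sq_nonneg (t^2*(1-t)),
    mul_nonneg (mul_nonneg h0 h0) h0]

private lemma polyU2 {t : ℝ} (h0 : 1 ≤ t) (h1 : t ≤ 1.5707965) :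
    1.5707965 - t ≤ (1 - t^2/4 + t^4/32 - t^6/288)^2 := by
  have hL : 0.7777 - 0.45*(t-1) ≤ 1 - t^2/4 + t^4/32 - t^6/288 := by
    nlinarith [sq_nonneg (t-1), sq_nonneg (t^2-1), sq_nonneg ((t-1)*(t-1.5707965)),
      mul_nonneg (by linarith : (0:ℝ) ≤ t - 1) (by linarith : (0:ℝ) ≤ 1.5707965 - t)]
  have hL0 : (0:ℝ) ≤ 0.7777 - 0.45*(t-1) := by norm_num; linarith
  have hLsq : 1.5707965 - t ≤ (0.7777 - 0.45*(t-1))^2 := by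
    nlinarith [sq_nonneg (t-1), mul_nonneg (by linarith : (0:ℝ) ≤ t - 1)
      (by linarith : (0:ℝ) ≤ 1.5707965 - t)]
  nlinarith [mul_le_mul hL hL hL0 (le_trans hL0 hL)]

private lemma polyA1 {t : ℝ} (h0 : 0 ≤ t) (h1 : t ≤ 0.95) :
    1 - t^2/2 + 0.0357*t^4 - 0.002*t^6
      ≤ 2*(2*(1 - t^2/32 - 5*t^4/24576)^2 - 1)^2 - 1 := by
  have hv : (0:ℝ) ≤ 0.95 - t := by linarith
  nlinarith [mul_nonneg (mul_nonneg (pow_nonneg h0 6) hv) (by linarith : (0:ℝ) ≤ 0.95 + t),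
    pow_nonneg h0 4, pow_nonneg h0 6, pow_nonneg h0 10, pow_nonneg h0 12,
    pow_nonneg h0 14, pow_nonneg h0 16]

private lemma polyA2 {t : ℝ} (h0 : 0 ≤ t) (h1 : t ≤ 0.95) :
    1 - 0.164245*t^4 ≤ (1 - t^2/2 + 0.0357*t^4 - 0.002*t^6)*(1+t^2/2+t^4/8) := by
  have hv : (0:ℝ) ≤ 0.95 - t := by linarith
  nlinarith [mul_nonneg (mul_nonneg (pow_nonneg h0 4) hv) (by linarith : (0:ℝ) ≤ 0.95 + t),
    mul_nonneg (mul_nonneg (pow_nonneg h0 8) hv) (by linarith : (0:ℝ) ≤ 0.95 + t),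
    pow_nonneg h0 4, pow_nonneg h0 8]

private lemma polyA3 {t : ℝ} (h0 : 0 ≤ t) (h1 : t ≤ 0.95) :
    (0:ℝ) ≤ 1 - t^2/32 - 5*t^4/24576 := by
  have h2 : t^2 ≤ 0.9025 := by nlinarith
  nlinarith [sq_nonneg (t^2)]

private lemma polyA4 {t : ℝ} (h0 : 0 ≤ t) (h1 : t ≤ 0.95) :
    (0:ℝ) ≤ 2*(1 - t^2/32 - 5*t^4/24576)^2 - 1 := by
  have h2 : t^2 ≤ 0.9025 := by nlinarith
  nlinarith [sq_nonneg (t^2), sq_nonneg (t^2 - 0.9025)]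

private lemma polyB {t : ℝ} (h0 : 0.95 ≤ t) (h1 : t ≤ 1.5707965) :
    2*(3.141593 + 2*t)*(3.141593^2 + 4*t^2)
      ≤ (1 - (1.5707965 - t)^2/4)*((1 + t^2/2 + t^4/8)*3.141592^4) := by
  have hu : (0:ℝ) ≤ t - 0.95 := by linarith
  have hv : (0:ℝ) ≤ 1.5707965 - t := by linarith
  nlinarith [mul_nonneg (pow_nonneg hu 3) hv, mul_nonneg (pow_nonneg hu 4) hv,
    mul_nonneg (pow_nonneg hu 5) hv, pow_nonneg hu 3, pow_nonneg hu 4,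
    pow_nonneg hu 2, hu]

private lemma pi4_le : π^4 ≤ 97.40918 := by
  have hπu : π < 3.141593 := pi_lt_d6
  have hπ0 : (0:ℝ) < π := pi_pos
  have h2 : π^2 ≤ 9.869607 := by nlinarith
  nlinarith [sq_nonneg π]

private lemma pi4_ge : (3.141592:ℝ)^4 ≤ π^4 := by
  have hπl : 3.141592 < π := pi_gt_d6
  have hπ0 : (0:ℝ) < π := pi_pos
  have h2 : (3.141592:ℝ)^2 ≤ π^2 := by nlinarith
  nlinarith [sq_nonneg π, hπ0]

private lemma polyB2 {t p : ℝ} (h0 : 0 ≤ t) (hp0 : 0 < p) (hp2 : p < 3.141593) :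
    2*(p + 2*t)*(p^2 + 4*t^2) ≤ 2*(3.141593 + 2*t)*(3.141593^2 + 4*t^2) := by
  have hp : (0:ℝ) ≤ 3.141593 - p := by linarith
  have hsq : (0:ℝ) ≤ 3.141593^2 - p^2 := by nlinarith
  nlinarith [mul_nonneg hp (sq_nonneg t), mul_nonneg h0 hsq, mul_nonneg hp hp0.le,
    mul_nonneg (mul_nonneg hp hp0.le) hp0.le]

private lemma cos_le_exp_aux {θ : ℝ} (h0 : 0 ≤ θ) (h2 : θ ≤ π/2) :
    Real.cos θ ≤ Real.exp (-(θ^2/2)) := by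
  have hπu : π < 3.141593 := pi_lt_d6
  have hθ' : θ ≤ 1.5707965 := by linarith
  have hexp := exp_half_sq_lower h0 hθ'
  rcases le_or_gt θ 1 with h|h
  · have hc := Real.cos_bound (x := θ) (by rwa [abs_of_nonneg h0])
    rw [abs_sub_le_iff, abs_of_nonneg h0] at hc
    have hcos : Real.cos θ ≤ 1 - θ^2/2 + 5/96*θ^4 := by nlinarith [hc.1]
    linarith [polyU1 h0 h]
  · have hs0 : 0 ≤ π/2 - θ := by linarith
    have hsin : Real.sin (π/2 - θ) ≤ π/2 - θ := Real.sin_le hs0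
    rw [Real.sin_pi_div_two_sub] at hsin
    have : Real.cos θ ≤ 1.5707965 - θ := by linarith
    linarith [polyU2 h.le hθ']

set_option maxHeartbeats 2000000 in
private lemma core_lower_aux {θ : ℝ} (h0 : 0 ≤ θ) (h2 : θ ≤ π/2) :
    1 - 16*θ^4/π^4 ≤ Real.cos θ * (1 + θ^2/2 + θ^4/8) := by
  have hπl : 3.141592 < π := pi_gt_d6
  have hπu : π < 3.141593 := pi_lt_d6
  have hπ0 : (0:ℝ) < π := pi_pos
  have hπ4 : (0:ℝ) < π^4 := by positivity
  have hF : (0:ℝ) < 1 + θ^2/2 + θ^4/8 := by positivity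
  rcases le_or_gt θ 0.95 with h|h
  · -- small θ : iterated double angle
    have h16 : 1 - 16*θ^4/π^4 ≤ 1 - 0.164245*θ^4 := by
      have hth4 : (0:ℝ) ≤ θ^4 := by positivity
      have : 0.164245*θ^4 ≤ 16*θ^4/π^4 := by
        rw [le_div_iff₀ hπ4]
        nlinarith [pi4_le, hth4]
      linarith
    have hquarter : |θ/4| ≤ 1 := by rw [abs_of_nonneg (by linarith)]; linarith
    have hc := Real.cos_bound hquarter
    rw [abs_sub_le_iff, abs_of_nonneg (by linarith : (0:ℝ) ≤ θ/4)] at hc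
    have hd : 1 - θ^2/32 - 5*θ^4/24576 ≤ Real.cos (θ/4) := by nlinarith [hc.2]
    have hd0 := polyA3 h0 h
    have hhalf : 2*(1 - θ^2/32 - 5*θ^4/24576)^2 - 1 ≤ Real.cos (θ/2) := by
      have hcm : Real.cos (2*(θ/4)) = 2 * Real.cos (θ/4)^2 - 1 := Real.cos_two_mul _
      have heq2 : (2:ℝ)*(θ/4) = θ/2 := by ring
      rw [heq2] at hcm
      rw [hcm]
      nlinarith [hd, hd0]
    have he0 := polyA4 h0 h
    have hcosθ : 2*(2*(1 - θ^2/32 - 5*θ^4/24576)^2 - 1)^2 - 1 ≤ Real.cos θ := by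
      have hcm : Real.cos (2*(θ/2)) = 2 * Real.cos (θ/2)^2 - 1 := Real.cos_two_mul _
      have heq2 : (2:ℝ)*(θ/2) = θ := by ring
      rw [heq2] at hcm
      rw [hcm]
      nlinarith [hhalf, he0]
    have hmul : (1 - θ^2/2 + 0.0357*θ^4 - 0.002*θ^6)*(1 + θ^2/2 + θ^4/8)
        ≤ Real.cos θ * (1 + θ^2/2 + θ^4/8) :=
      mul_le_mul_of_nonneg_right (le_trans (polyA1 h0 h) hcosθ) hF.le
    linarith [polyA2 h0 h]
  · -- large θ
    rcases eq_or_lt_of_le h2 with heq|hlt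
    · rw [heq, Real.cos_pi_div_two]
      have : 1 - 16*(π/2)^4/π^4 = 0 := by field_simp; ring
      rw [this]
      simp
    · obtain ⟨s, hs_def⟩ : ∃ s : ℝ, s = π/2 - θ := ⟨_, rfl⟩
      have hs0 : 0 < s := by rw [hs_def]; linarith
      have hs1 : s ≤ 1 := by rw [hs_def]; linarith
      have hsin : s - s^3/4 < Real.sin s := by have := Real.sin_gt_sub_cube hs0; linarith [pow_pos hs0 3]
      have hcs : Real.sin s = Real.cos θ := by rw [hs_def, Real.sin_pi_div_two_sub]
      have hsu : s ≤ 1.5707965 - θ := by rw [hs_def]; linarith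
      have hθu : θ ≤ 1.5707965 := by linarith
      have hkey := polyB h.le hθu
      have hbridge : 2*(π + 2*θ)*(π^2 + 4*θ^2) ≤ (1 - s^2/4)*((1 + θ^2/2 + θ^4/8)*π^4) := by
        have hA := polyB2 h0 hπ0 hπu
        have hB0 : (0:ℝ) ≤ 1 - (1.5707965 - θ)^2/4 := by
          nlinarith [mul_nonneg (by linarith : (0:ℝ) ≤ 1.5707965 - θ) (by linarith : (0:ℝ) ≤ θ - 0.95)]
        have hB1 : (1 - (1.5707965 - θ)^2/4) ≤ (1 - s^2/4) := by
          have := pow_le_pow_left₀ hs0.le hsu 2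
          linarith
        have hB2 : (1 + θ^2/2 + θ^4/8)*3.141592^4 ≤ (1 + θ^2/2 + θ^4/8)*π^4 :=
          mul_le_mul_of_nonneg_left pi4_ge hF.le
        have hB3 : (1 - (1.5707965 - θ)^2/4)*((1 + θ^2/2 + θ^4/8)*3.141592^4)
            ≤ (1 - s^2/4)*((1 + θ^2/2 + θ^4/8)*π^4) := by
          have hpos : (0:ℝ) ≤ (1 + θ^2/2 + θ^4/8)*3.141592^4 := by positivity
          exact mul_le_mul hB1 hB2 hpos (by nlinarith [hs1, hs0.le])
        linarith
      have hchain : (s - s^3/4)*(1 + θ^2/2 + θ^4/8) ≤ Real.cos θ * (1 + θ^2/2 + θ^4/8) := by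
        apply mul_le_mul_of_nonneg_right _ hF.le
        rw [← hcs]; linarith
      have hfact : (s - s^3/4)*(1 + θ^2/2 + θ^4/8)*π^4
          = s*((1 - s^2/4)*((1 + θ^2/2 + θ^4/8)*π^4)) := by ring
      have hlow : π^4 - 16*θ^4 ≤ (s - s^3/4)*(1 + θ^2/2 + θ^4/8)*π^4 := by
        rw [hfact]
        have hmm := mul_le_mul_of_nonneg_left hbridge hs0.le
        have hid : s*(2*(π + 2*θ)*(π^2 + 4*θ^2)) = π^4 - 16*θ^4 := by
          rw [hs_def]; ring
        linarith
      have hfin : π^4 - 16*θ^4 ≤ (Real.cos θ * (1 + θ^2/2 + θ^4/8))*π^4 := by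
        have := mul_le_mul_of_nonneg_right hchain (by positivity : (0:ℝ) ≤ π^4)
        linarith
      rw [← sub_nonneg]
      have heq3 : Real.cos θ * (1 + θ^2/2 + θ^4/8) - (1 - 16*θ^4/π^4)
          = ((Real.cos θ * (1 + θ^2/2 + θ^4/8))*π^4 - (π^4 - 16*θ^4))/π^4 := by
        field_simp
      rw [heq3]
      exact div_nonneg (by linarith) (by positivity)

private lemma factor_bounds {θ : ℝ} (h : |θ| ≤ π/2) :
    Real.exp (-(θ^2/2)) * (1 - 16*θ^4/π^4) ≤ Real.cos θ ∧
    Real.cos θ ≤ Real.exp (-(θ^2/2)) ∧ (0:ℝ) ≤ 1 - 16*θ^4/π^4 ∧ 0 ≤ Real.cos θ := by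
  have h0 : 0 ≤ |θ| := abs_nonneg θ
  have hcosabs : Real.cos |θ| = Real.cos θ := Real.cos_abs θ
  have hsq : |θ|^2 = θ^2 := sq_abs θ
  have h4 : |θ|^4 = θ^4 := by rw [← abs_pow]; exact abs_of_nonneg (by positivity)
  have hπ4 : (0:ℝ) < π^4 := by positivity
  have hFpos : (0:ℝ) < 1 + θ^2/2 + θ^4/8 := by positivity
  have hub : Real.cos θ ≤ Real.exp (-(θ^2/2)) := by
    have := cos_le_exp_aux h0 h
    rwa [hcosabs, hsq] at this
  have hcore : 1 - 16*θ^4/π^4 ≤ Real.cos θ * (1 + θ^2/2 + θ^4/8) := by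
    have := core_lower_aux h0 h
    rwa [hcosabs, hsq, h4] at this
  have hfac : (0:ℝ) ≤ 1 - 16*θ^4/π^4 := by
    have h16 : |θ|^4 ≤ (π/2)^4 := pow_le_pow_left₀ h0 h 4
    rw [h4] at h16
    have : 16*θ^4/π^4 ≤ 1 := by
      rw [div_le_one hπ4]
      nlinarith [h16]
    linarith
  have hcos0 : 0 ≤ Real.cos θ := by
    rw [← hcosabs]
    exact Real.cos_nonneg_of_mem_Icc ⟨by linarith [pi_pos], h⟩
  refine ⟨?_, hub, hfac, hcos0⟩
  have hexp_le : Real.exp (-(θ^2/2)) ≤ (1 + θ^2/2 + θ^4/8)⁻¹ := by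
    rw [Real.exp_neg]
    apply inv_anti₀ hFpos
    calc 1 + θ^2/2 + θ^4/8 = 1 + θ^2/2 + (θ^2/2)^2/2 := by ring
      _ ≤ Real.exp (θ^2/2) := Real.quadratic_le_exp_of_nonneg (by positivity)
  calc Real.exp (-(θ^2/2)) * (1 - 16*θ^4/π^4)
      ≤ (1 + θ^2/2 + θ^4/8)⁻¹ * (1 - 16*θ^4/π^4) :=
        mul_le_mul_of_nonneg_right hexp_le hfac
    _ ≤ Real.cos θ := by
        rw [inv_mul_eq_div, div_le_iff₀ hFpos]
        exact hcore

/-- For `-N/2 ≤ β ≤ N/2` (`N` a positive integer),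
`exp(-π²β²/(2N)) (1 - C'β⁴/N⁴)^N ≤ cos^N(πβ/N) ≤ exp(-π²β²/(2N))`
for an appropriate absolute constant `C' > 0`. -/
theorem stmt_17 :
    ∃ C' : ℝ, 0 < C' ∧ ∀ N : ℕ, 0 < N → ∀ β : ℝ, |β| ≤ (N : ℝ) / 2 →
      Real.exp (-(Real.pi ^ 2 * β ^ 2) / (2 * N)) * (1 - C' * β ^ 4 / (N : ℝ) ^ 4) ^ N
          ≤ Real.cos (Real.pi * β / N) ^ N ∧
      Real.cos (Real.pi * β / N) ^ N ≤ Real.exp (-(Real.pi ^ 2 * β ^ 2) / (2 * N)) := by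
  refine ⟨16, by norm_num, ?_⟩
  intro N hN β hβ
  have hN0 : (0:ℝ) < N := by exact_mod_cast hN
  have hθ : |π * β / N| ≤ π/2 := by
    rw [abs_div, abs_mul, abs_of_nonneg pi_pos.le, Nat.abs_cast, div_le_iff₀ hN0]
    calc π * |β| ≤ π * ((N:ℝ)/2) := mul_le_mul_of_nonneg_left hβ pi_pos.le
      _ = π/2 * N := by ring
  obtain ⟨hlow, hub, hfac, hcos0⟩ := factor_bounds hθ
  have hexp_eq : Real.exp (-(π ^ 2 * β ^ 2) / (2 * N)) = Real.exp (-((π * β / N)^2/2)) ^ N := by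
    rw [← Real.exp_nat_mul]
    congr 1
    field_simp
  have hfac_eq : 1 - 16 * β ^ 4 / (N:ℝ) ^ 4 = 1 - 16*(π * β / N)^4/π^4 := by
    have : 16*(π * β / N)^4/π^4 = 16 * β ^ 4 / (N:ℝ) ^ 4 := by
      field_simp
    rw [this]
  constructor
  · rw [hexp_eq, hfac_eq, ← mul_pow]
    exact pow_le_pow_left₀ (mul_nonneg (Real.exp_nonneg _) hfac) hlow N
  · rw [hexp_eq]
    exact pow_le_pow_left₀ hcos0 hub N
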